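/- Let ℓ ≥ 1 and M the (ℓ+1)×(ℓ+1) matrix with entries M_{i,j} = 2cos(2πij/(2ℓ)) for 0 ≤ i,j ≤ ℓ. Then (det M)² = 16·(2ℓ)^{ℓ+1}. -/

import Mathlib

open Real Finset Matrix

lemma cos_int_pi' (m : ℤ) : Real.cos (m * π) = (-1 : ℝ)^m := by
  rcases Int.even_or_odd m with ⟨k, hk⟩ | ⟨k, hk⟩
  · subst hk
    rw [Even.neg_one_zpow ⟨k, rfl⟩]
    push_cast
    rw [show ((k:ℝ) + k) * π = k * (2*π) by ring, Real.cos_int_mul_two_pi]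
  · subst hk
    rw [Odd.neg_one_zpow ⟨k, rfl⟩]
    push_cast
    rw [show ((2:ℝ)*k + 1) * π = k * (2*π) + π by ring]
    simpa using Real.cos_int_mul_two_pi_add_pi k

lemma trap_sum (ℓ : ℕ) (hℓ : 1 ≤ ℓ) (m : ℤ) :
    ∑ j ∈ Finset.range (ℓ+1), Real.cos (π * m * j / ℓ)
      = (if (2*(ℓ:ℤ)) ∣ m then (ℓ:ℝ) else 0) + (1 + (-1:ℝ)^m)/2 := by
  have hl : (ℓ:ℝ) ≠ 0 := Nat.cast_ne_zero.2 (by omega)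
  by_cases h : (2*(ℓ:ℤ)) ∣ m
  · rw [if_pos h]
    have heven : Even m := by obtain ⟨k, hk⟩ := h; exact ⟨ℓ*k, by rw [hk]; ring⟩
    rw [heven.neg_one_zpow]
    -- sum of cosines, all equal 1
    obtain ⟨k, rfl⟩ := h
    have : ∀ j ∈ Finset.range (ℓ+1), Real.cos (π * ((2*(ℓ:ℤ)*k : ℤ):ℝ) * j / ℓ) = 1 := by
      intro j _
      rw [show π * ((2*(ℓ:ℤ)*k : ℤ):ℝ) * j / ℓ = ((k * j : ℤ):ℝ) * (2 * π) by
        push_cast; field_simp]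
      exact Real.cos_int_mul_two_pi _
    rw [Finset.sum_congr rfl this]
    simp
  · rw [if_neg h, zero_add]
    -- complex geometric sum
    have hlc : (ℓ:ℂ) ≠ 0 := Nat.cast_ne_zero.2 (by omega)
    have hpi := Real.pi_ne_zero
    let z : ℂ := Complex.exp ((π * m / ℓ : ℝ) * Complex.I)
    have hz0 : z ≠ 0 := Complex.exp_ne_zero _
    have hz1 : z ≠ 1 := by
      intro hzz
      rw [show z = Complex.exp ((π * m / ℓ : ℝ) * Complex.I) from rfl,
        Complex.exp_eq_one_iff] at hzz
      obtain ⟨n, hn⟩ := hzz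
      apply h
      have himn := congrArg Complex.im hn
      push_cast at himn
      simp [Complex.mul_im, Complex.I_re, Complex.I_im] at himn
      have hr : π * (m:ℝ) / ℓ = n * (2 * π) := by simpa using himn
      have h2 : π * (m:ℝ) = π * (2 * ℓ * n) := by
        field_simp at hr; linear_combination π * hr
      have h3 : (m:ℝ) = 2 * ℓ * n := mul_left_cancel₀ hpi h2
      exact ⟨n, by exact_mod_cast h3⟩
    have hzpow : ∀ j : ℕ, z ^ j = Complex.exp ((π * m * j / ℓ : ℝ) * Complex.I) := by
      intro j
      rw [show z = Complex.exp ((π * m / ℓ : ℝ) * Complex.I) from rfl, ← Complex.exp_nat_mul]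
      congr 1
      push_cast
      ring
    have hre : ∀ j : ℕ, Real.cos (π * m * j / ℓ) = (z ^ j).re := by
      intro j
      rw [hzpow j, Complex.exp_ofReal_mul_I_re]
    have hzl : z ^ ℓ = (-1 : ℂ)^m := by
      rw [show z = Complex.exp ((π * m / ℓ : ℝ) * Complex.I) from rfl, ← Complex.exp_nat_mul]
      rw [show ((ℓ:ℂ)) * (((π * m / ℓ :ℝ):ℂ) * Complex.I) = m * (π * Complex.I) by
        push_cast; field_simp]
      rw [Complex.exp_int_mul, Complex.exp_pi_mul_I]
    have hsum : ∑ j ∈ Finset.range (ℓ+1), z ^ j = ((-1:ℂ)^m * z - 1) / (z - 1) := by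
      rw [geom_sum_eq hz1]
      congr 1
      rw [pow_succ, hzl]
    have hre2 : ∑ j ∈ Finset.range (ℓ+1), Real.cos (π * m * j / ℓ)
        = (((-1:ℂ)^m * z - 1) / (z - 1)).re := by
      rw [← hsum, Complex.re_sum]
      exact Finset.sum_congr rfl fun j _ => hre j
    rw [hre2]
    rcases Int.even_or_odd m with he | ho
    · rw [he.neg_one_zpow, Even.neg_one_zpow (by exact_mod_cast he)]
      rw [one_mul, div_self (sub_ne_zero.2 hz1)]
      norm_num
    · rw [ho.neg_one_zpow, Odd.neg_one_zpow (by exact_mod_cast ho)]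
      have hz1' : z⁻¹ - 1 ≠ 0 := by
        rw [sub_ne_zero]
        intro hh
        exact hz1 (by rw [← inv_inv z, hh, inv_one])
      have hconj : (starRingEnd ℂ) z = z⁻¹ := by
        rw [show z = Complex.exp ((π * m / ℓ : ℝ) * Complex.I) from rfl, ← Complex.exp_conj,
          ← Complex.exp_neg]
        congr 1
        simp [Complex.conj_I]
      have hconjw : (starRingEnd ℂ) (((-1:ℂ) * z - 1) / (z - 1)) = (-z⁻¹ - 1)/(z⁻¹ - 1) := by
        rw [map_div₀]
        simp [hconj]
      have key : ((-1:ℂ) * z - 1)/(z-1) + (-z⁻¹ - 1)/(z⁻¹ - 1) = 0 := by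
        rw [div_add_div _ _ (sub_ne_zero.2 hz1) hz1', div_eq_zero_iff]
        left
        field_simp
        ring
      have hw : ((-1:ℂ) * z - 1) / (z - 1)
          + (starRingEnd ℂ) (((-1:ℂ) * z - 1) / (z - 1)) = 0 := by
        rw [hconjw]; exact key
      have hre0 := congrArg Complex.re hw
      rw [Complex.add_re, Complex.conj_re, Complex.zero_re] at hre0
      have : ((((-1:ℂ)) * z - 1) / (z - 1)).re = 0 := by linarith
      rw [this]
      norm_num

noncomputable def eps (ℓ : ℕ) : Fin (ℓ+1) → ℝ :=
  fun j => if j = 0 then 1/2 else if j = Fin.last ℓ then 1/2 else 1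

lemma eps_split (ℓ : ℕ) (hℓ : 1 ≤ ℓ) (f : Fin (ℓ+1) → ℝ) :
    ∑ j, eps ℓ j * f j = (∑ j, f j) - f 0 / 2 - f (Fin.last ℓ) / 2 := by
  have h0l : (0 : Fin (ℓ+1)) ≠ Fin.last ℓ := by
    intro hh
    have := congrArg Fin.val hh
    simp [Fin.val_last] at this
    omega
  have hterm : ∀ j : Fin (ℓ+1), eps ℓ j * f j
      = f j - (if j = 0 then f j / 2 else 0) - (if j = Fin.last ℓ then f j / 2 else 0) := by
    intro j
    by_cases h1 : j = 0
    · subst h1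
      simp [eps, h0l]
      ring
    · by_cases h2 : j = Fin.last ℓ
      · subst h2
        simp [eps, h1]
        ring
      · simp [eps, h1, h2]
  rw [Finset.sum_congr rfl (fun j _ => hterm j), Finset.sum_sub_distrib,
    Finset.sum_sub_distrib]
  simp [Finset.sum_ite_eq']

theorem stmt_5 (ℓ : ℕ) (hℓ : 1 ≤ ℓ)
    (M : Matrix (Fin (ℓ + 1)) (Fin (ℓ + 1)) ℝ)
    (hM : ∀ i j, M i j = 2 * Real.cos (2 * π * i.val * j.val / (2 * ℓ))) :
    (M.det) ^ 2 = 16 * (2 * ℓ : ℝ) ^ (ℓ + 1) := by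
  have hl : (ℓ:ℝ) ≠ 0 := Nat.cast_ne_zero.2 (by omega)
  have hℓ0 : ¬ (ℓ = 0) := by omega
  have h0l : (0 : Fin (ℓ+1)) ≠ Fin.last ℓ := by
    intro hh
    have := congrArg Fin.val hh
    simp [Fin.val_last] at this
    omega
  set d : Fin (ℓ+1) → ℝ :=
    fun i => 2 * (ℓ:ℝ) * (if i = 0 ∨ i = Fin.last ℓ then 2 else 1) with hd
  have hMEM : M * Matrix.diagonal (eps ℓ) * M = Matrix.diagonal d := by
    ext i k
    have hi : i.val ≤ ℓ := Nat.lt_succ_iff.mp i.isLt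
    have hk : k.val ≤ ℓ := Nat.lt_succ_iff.mp k.isLt
    set m₁ : ℤ := (i.val : ℤ) + k.val with hm₁
    set m₂ : ℤ := (i.val : ℤ) - k.val with hm₂
    have hd2 : (2*(ℓ:ℤ)) ∣ m₂ ↔ i = k := by
      constructor
      · intro hdv
        have hb : |m₂| < 2*(ℓ:ℤ) := abs_lt.2 ⟨by omega, by omega⟩
        have h0 : m₂ = 0 := Int.eq_zero_of_abs_lt_dvd hdv hb
        exact Fin.ext (by omega)
      · rintro rfl
        exact ⟨0, by omega⟩
    have hd1 : (2*(ℓ:ℤ)) ∣ m₁ ↔ ((i:ℕ) = 0 ∧ (k:ℕ) = 0) ∨ ((i:ℕ) = ℓ ∧ (k:ℕ) = ℓ) := by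
      constructor
      · intro hdv
        by_cases hlt : m₁ < 2*(ℓ:ℤ)
        · have hb : |m₁| < 2*(ℓ:ℤ) := abs_lt.2 ⟨by omega, hlt⟩
          have h0 : m₁ = 0 := Int.eq_zero_of_abs_lt_dvd hdv hb
          left; omega
        · right; omega
      · rintro (⟨h1, h2⟩ | ⟨h1, h2⟩)
        · exact ⟨0, by omega⟩
        · exact ⟨1, by omega⟩
    -- entrywise computation
    have hterm : ∀ j : Fin (ℓ+1), M i j * eps ℓ j * M j k
        = eps ℓ j * (2 * Real.cos (π * (m₁:ℝ) * j.val / ℓ)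
            + 2 * Real.cos (π * (m₂:ℝ) * j.val / ℓ)) := by
      intro j
      rw [hM i j, hM j k]
      have e1 : (2*π*i.val*j.val/(2*ℓ) : ℝ) + 2*π*j.val*k.val/(2*ℓ)
          = π * (m₁:ℝ) * j.val / ℓ := by
        rw [hm₁]; push_cast; field_simp
      have e2 : (2*π*i.val*j.val/(2*ℓ) : ℝ) - 2*π*j.val*k.val/(2*ℓ)
          = π * (m₂:ℝ) * j.val / ℓ := by
        rw [hm₂]; push_cast; field_simp
      rw [← e1, ← e2, Real.cos_add, Real.cos_sub]
      ring
    have hcl : ∀ m : ℤ, Real.cos (π * (m:ℝ) * ((Fin.last ℓ).val : ℝ) / ℓ) = (-1:ℝ)^m := by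
      intro m
      rw [Fin.val_last, show (π * (m:ℝ) * (ℓ:ℝ) / ℓ : ℝ) = (m:ℝ) * π by field_simp,
        cos_int_pi']
    have hval : (M * Matrix.diagonal (eps ℓ) * M) i k
        = (if (2*(ℓ:ℤ)) ∣ m₁ then (2*(ℓ:ℝ)) else 0)
          + (if (2*(ℓ:ℤ)) ∣ m₂ then (2*(ℓ:ℝ)) else 0) := by
      rw [Matrix.mul_apply]
      simp only [Matrix.mul_diagonal]
      rw [Finset.sum_congr rfl (fun j _ => hterm j), eps_split ℓ hℓ]
      have hR : (∑ j : Fin (ℓ+1), (2 * Real.cos (π * (m₁:ℝ) * j.val / ℓ)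
              + 2 * Real.cos (π * (m₂:ℝ) * j.val / ℓ)))
          = ∑ j ∈ Finset.range (ℓ+1), (2 * Real.cos (π * (m₁:ℝ) * j / ℓ)
              + 2 * Real.cos (π * (m₂:ℝ) * j / ℓ)) :=
        Fin.sum_univ_eq_sum_range
          (fun n : ℕ => 2 * Real.cos (π * (m₁:ℝ) * n / ℓ)
            + 2 * Real.cos (π * (m₂:ℝ) * n / ℓ)) (ℓ+1)
      rw [hR, Finset.sum_add_distrib, ← Finset.mul_sum, ← Finset.mul_sum,
        trap_sum ℓ hℓ m₁, trap_sum ℓ hℓ m₂]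
      have c0 : ((0 : Fin (ℓ+1)).val : ℝ) = 0 := by simp
      rw [c0]
      simp only [mul_zero, zero_div, Real.cos_zero, hcl]
      split_ifs <;> ring
    rw [hval, Matrix.diagonal_apply]
    by_cases hik : i = k
    · subst hik
      rw [if_pos rfl]
      show _ = 2 * (ℓ:ℝ) * (if i = 0 ∨ i = Fin.last ℓ then 2 else 1)
      have hm2 : (2*(ℓ:ℤ)) ∣ m₂ := hd2.mpr rfl
      by_cases h0 : i = 0
      · subst h0
        rw [if_pos (Or.inl rfl), if_pos hm2, if_pos (hd1.mpr (Or.inl ⟨rfl, rfl⟩))]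
        ring
      · by_cases hL : i = Fin.last ℓ
        · subst hL
          rw [if_pos (Or.inr rfl), if_pos hm2,
            if_pos (hd1.mpr (Or.inr ⟨Fin.val_last ℓ, Fin.val_last ℓ⟩))]
          ring
        · have hv0 : (i:ℕ) ≠ 0 := fun hh => h0 (Fin.ext hh)
          have hvL : (i:ℕ) ≠ ℓ := fun hh => hL (Fin.ext (by simp [Fin.val_last, hh]))
          have hnd1 : ¬ (2*(ℓ:ℤ)) ∣ m₁ := by
            intro hh
            rcases hd1.mp hh with ⟨a, _⟩ | ⟨a, _⟩
            · exact hv0 a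
            · exact hvL a
          rw [if_neg (show ¬(i = 0 ∨ i = Fin.last ℓ) by tauto), if_pos hm2, if_neg hnd1]
          ring
    · have hnd1 : ¬ (2*(ℓ:ℤ)) ∣ m₁ := by
        intro hh
        rcases hd1.mp hh with ⟨a, b⟩ | ⟨a, b⟩ <;> exact hik (Fin.ext (by omega))
      have hnd2 : ¬ (2*(ℓ:ℤ)) ∣ m₂ := fun hh => hik (hd2.mp hh)
      rw [if_neg hik, if_neg hnd1, if_neg hnd2]
      ring
  -- determinants
  have hdet := congrArg Matrix.det hMEM
  rw [Matrix.det_mul, Matrix.det_mul, Matrix.det_diagonal, Matrix.det_diagonal] at hdet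
  have hprod1 : ∏ j : Fin (ℓ+1), eps ℓ j = 1/4 := by
    have hsplit : ∀ j : Fin (ℓ+1), eps ℓ j
        = (if j = 0 then (1/2 : ℝ) else 1) * (if j = Fin.last ℓ then (1/2 : ℝ) else 1) := by
      intro j
      by_cases h1 : j = 0
      · subst h1; simp [eps, h0l, hℓ0]
      · by_cases h2 : j = Fin.last ℓ <;> simp [eps, h1, h2, hℓ0]
    rw [Finset.prod_congr rfl (fun j _ => hsplit j), Finset.prod_mul_distrib]
    simp [Finset.prod_ite_eq']
    norm_num
  have hprod2 : ∏ i : Fin (ℓ+1), d i = (2*(ℓ:ℝ))^(ℓ+1) * 4 := by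
    have hdi : ∀ i : Fin (ℓ+1), d i
        = 2 * (ℓ:ℝ) * ((if i = 0 then (2:ℝ) else 1) * (if i = Fin.last ℓ then (2:ℝ) else 1)) := by
      intro j
      show (2 * (ℓ:ℝ) * (if j = 0 ∨ j = Fin.last ℓ then 2 else 1)) = _
      by_cases h1 : j = 0
      · subst h1; simp [h0l, hℓ0]
      · by_cases h2 : j = Fin.last ℓ <;> simp [h1, h2, hℓ0]
    rw [Finset.prod_congr rfl (fun j _ => hdi j), Finset.prod_mul_distrib,
      Finset.prod_const, Finset.card_univ, Fintype.card_fin, Finset.prod_mul_distrib,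
      Finset.prod_ite_eq' Finset.univ (0 : Fin (ℓ+1)) (fun _ => (2:ℝ)),
      Finset.prod_ite_eq' Finset.univ (Fin.last ℓ) (fun _ => (2:ℝ))]
    simp only [Finset.mem_univ, if_true, mul_pow]
    ring
  rw [hprod1, hprod2] at hdet
  linear_combination 4 * hdet
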